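/- Let T_n(q) = Σ_{σ ∈ 𝒬̂_{n+1}} q^{cyc(σ)}, a polynomial in q with integer coefficients. Then for every integer n ≥ 1, T_{n+1}(q) = (n+1+q)·T_n(q) − n·T_{n−1}(q), with T_0(q) = q and T_1(q) = q + q². -/

import Mathlib

open Finset Polynomial

/-- `fixp(σ)`: the number of fixed points of `σ`. -/
def fixp {n : ℕ} (σ : Equiv.Perm (Fin n)) : ℕ :=
  (Finset.univ.filter fun i => σ i = i).card

/-- `cyc(σ)`: the number of cycles of `σ`, fixed points counted. -/
def cyc {n : ℕ} (σ : Equiv.Perm (Fin n)) : ℕ :=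
  σ.cycleType.card + fixp σ

/-- `𝒬̂_{m+1}`: permutations `σ` of `{1, …, m+1}` such that every element `x` other
than the largest element in the cycle of `σ` containing the largest element
satisfies `σ(x) > x`. -/
noncomputable def Qhat (m : ℕ) : Finset (Equiv.Perm (Fin (m + 1))) :=
  Finset.univ.filter fun σ =>
    ∀ x, σ.SameCycle x (Fin.last m) → x ≠ Fin.last m → x < σ x

/-- `T_n(q) = Σ_{σ ∈ 𝒬̂_{n+1}} q^{cyc σ}`. -/
noncomputable def Tpoly (n : ℕ) : Polynomial ℤ :=
  ∑ σ ∈ Qhat n, X ^ cyc σ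

open Equiv Equiv.Perm


variable {α : Type*} [Fintype α] [DecidableEq α]

def ncyc (σ : Equiv.Perm α) : ℕ :=
  Multiset.card σ.cycleType + (Fintype.card α - σ.support.card)

lemma ncyc_one : ncyc (1 : Perm α) = Fintype.card α := by
  simp [ncyc]

lemma ncyc_extendDomain {β : Type*} [Fintype β] [DecidableEq β] {p : β → Prop}
    [DecidablePred p] (f : α ≃ Subtype p) (g : Perm α) :
    ncyc (g.extendDomain f) = ncyc g + (Fintype.card β - Fintype.card α) := by
  have hcard : Fintype.card α ≤ Fintype.card β :=
    Fintype.card_le_of_embedding (f.toEmbedding.trans (Function.Embedding.subtype p))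
  have hs : g.support.card ≤ Fintype.card α := Finset.card_le_univ _
  rw [ncyc, ncyc, cycleType_extendDomain, card_support_extend_domain]
  omega

lemma ncyc_isCycle_mul_disjoint {c d : Perm α} (hc : c.IsCycle) (h : Disjoint c d) :
    ncyc (c * d) + c.support.card = ncyc d + 1 := by
  have hct := h.cycleType_mul
  have hsupp := h.support_mul
  have hdis := disjoint_iff_disjoint_support.mp h
  have hcard : (c * d).support.card = c.support.card + d.support.card := by
    rw [hsupp, Finset.card_union_of_disjoint hdis]
  have hle : (c * d).support.card ≤ Fintype.card α := Finset.card_le_univ _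
  rw [ncyc, ncyc, hct, hc.cycleType]
  simp only [Multiset.card_add, Multiset.coe_card, List.length_singleton, Multiset.card_singleton]
  omega

-- swap x y * c is a cycle when c is a cycle, y ∈ supp c, x ∉ supp c
lemma isCycle_swap_mul_of_isCycle {c : Perm α} {x y : α} (hc : c.IsCycle)
    (hx : x ∉ c.support) (hy : y ∈ c.support) :
    (swap x y * c).IsCycle ∧ (swap x y * c).support = insert x c.support := by
  set g := swap x y * c with hg
  have hxy : x ≠ y := fun h => hx (h ▸ hy)
  have hcx : c x = x := notMem_support.mp hx
  have hgx : g x = y := by simp [hg, hcx]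
  have happ : ∀ z ∈ c.support, g z = if c z = y then x else c z := by
    intro z hz
    have hcz : c z ∈ c.support := apply_mem_support.mpr hz
    have hczx : c z ≠ x := fun h => hx (h ▸ hcz)
    by_cases h : c z = y
    · simp [hg, h]
    · rw [if_neg h]
      simp [hg, swap_apply_of_ne_of_ne hczx h]
  have hsupp : g.support = insert x c.support := by
    ext z
    simp only [mem_support, Finset.mem_insert]
    constructor
    · intro hz
      by_contra hcon
      push_neg at hcon
      obtain ⟨hzx, hzc⟩ := hcon
      have hzy : z ≠ y := by rintro rfl; exact (mem_support.mp hy) hzc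
      exact hz (by simp [hg, hzc, swap_apply_of_ne_of_ne hzx hzy])
    · rintro (rfl | hz)
      · rw [hgx]; exact hxy.symm
      · rw [happ z (mem_support.mpr hz)]
        by_cases h : c z = y
        · rw [if_pos h]
          exact fun hzx => hx (hzx ▸ mem_support.mpr hz)
        · rw [if_neg h]
          exact hz
  refine ⟨⟨x, by rw [hgx]; exact hxy.symm, ?_⟩, hsupp⟩
  intro z hz
  have hzmem : z ∈ g.support := mem_support.mpr hz
  rw [hsupp, Finset.mem_insert] at hzmem
  rcases hzmem with rfl | hzc
  · exact SameCycle.refl _ _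
  have hyz : c.SameCycle y z := hc.sameCycle (mem_support.mp hy) (mem_support.mp hzc)
  obtain ⟨k, -, hk⟩ := hyz.exists_pow_eq'
  suffices h : ∀ m : ℕ, g.SameCycle x ((c ^ m) y) by rw [← hk]; exact h k
  intro m
  induction m with
  | zero => exact ⟨1, by simpa using hgx⟩
  | succ m ih =>
    have hmem : (c ^ m) y ∈ c.support := pow_apply_mem_support.mpr hy
    have hstep : (c ^ (m + 1)) y = c ((c ^ m) y) := by
      rw [pow_succ', mul_apply]
    by_cases hcy : c ((c ^ m) y) = y
    · rw [hstep, hcy]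
      exact ⟨1, by simpa using hgx⟩
    · have hgm : g ((c ^ m) y) = (c ^ (m + 1)) y := by
        rw [happ _ hmem, if_neg hcy, hstep]
      exact ih.trans ⟨1, by simpa using hgm⟩

lemma ncyc_swap_mul {σ : Perm α} {x y : α} (hx : σ x = x) (hxy : x ≠ y) :
    ncyc (swap x y * σ) + 1 = ncyc σ := by
  by_cases hy : σ y = y
  · have hd : Disjoint (swap x y) σ := by
      intro z
      by_cases hzx : z = x
      · subst hzx; exact Or.inr hx
      by_cases hzy : z = y
      · subst hzy; exact Or.inr hy
      · exact Or.inl (swap_apply_of_ne_of_ne hzx hzy)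
    have := ncyc_isCycle_mul_disjoint (isCycle_swap hxy) hd
    rw [support_swap hxy] at this
    have h2 : ({x, y} : Finset α).card = 2 := by
      rw [Finset.card_insert_of_notMem (by simpa using hxy), Finset.card_singleton]
    omega
  · have hy' : y ∈ σ.support := mem_support.mpr hy
    have hx' : x ∉ σ.support := notMem_support.mpr hx
    set c := σ.cycleOf y with hc
    set d := σ * c⁻¹ with hd
    have hcycle : c.IsCycle := isCycle_cycleOf σ hy
    have hdz : ∀ z, σ.SameCycle y z → d z = z := by
      intro z hz
      rw [hd, mul_apply, cycleOf_inv, cycleOf_apply]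
      rw [if_pos (by rwa [sameCycle_inv])]
      simp
    have hdz' : ∀ z, ¬σ.SameCycle y z → d z = σ z := by
      intro z hz
      rw [hd, mul_apply, cycleOf_inv, cycleOf_apply, if_neg (by rwa [sameCycle_inv])]
    have hdisj : Disjoint c d := by
      intro z
      by_cases h : σ.SameCycle y z
      · exact Or.inr (hdz z h)
      · exact Or.inl (by rw [hc, cycleOf_apply, if_neg h])
    have hprod : σ = c * d := by
      ext z
      by_cases h : σ.SameCycle y z
      · rw [mul_apply, hdz z h, hc, cycleOf_apply, if_pos h]
      · rw [mul_apply, hdz' z h, hc, cycleOf_apply,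
          if_neg (fun hh => h (by rwa [← sameCycle_apply_right]))]
    have hxc : x ∉ c.support := fun h => hx' (support_cycleOf_le σ y h)
    have hyc : y ∈ c.support := by
      rw [hc, mem_support_cycleOf_iff]
      exact ⟨SameCycle.refl _ _, hy'⟩
    obtain ⟨hgc, hgs⟩ := isCycle_swap_mul_of_isCycle hcycle hxc hyc
    have hxd : x ∉ d.support := by
      intro h
      apply hx'
      rw [hprod, hdisj.support_mul]
      exact Finset.mem_union_right _ h
    have hdisj2 : Disjoint (swap x y * c) d := by
      rw [disjoint_iff_disjoint_support, hgs, Finset.insert_eq]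
      refine Finset.disjoint_union_left.mpr ⟨by simpa using hxd, ?_⟩
      exact disjoint_iff_disjoint_support.mp hdisj
    have key1 := ncyc_isCycle_mul_disjoint hgc hdisj2
    have key2 := ncyc_isCycle_mul_disjoint hcycle hdisj
    have heq : swap x y * σ = (swap x y * c) * d := by rw [hprod, mul_assoc]
    rw [heq]
    have hcard : (swap x y * c).support.card = c.support.card + 1 := by
      rw [hgs, Finset.card_insert_of_notMem hxc]
    have hclen : 1 ≤ c.support.card := Finset.card_pos.mpr ⟨y, hyc⟩
    rw [← hprod] at key2
    omega

noncomputable def Ppoly (m : ℕ) : Polynomial ℤ := ∑ σ : Perm (Fin m), X ^ ncyc σ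

lemma Ppoly_zero : Ppoly 0 = 1 := by
  rw [Ppoly]
  rw [Fintype.sum_eq_single (1 : Perm (Fin 0)) (fun σ h => absurd (Subsingleton.elim σ 1) h)]
  simp [ncyc_one]

lemma Ppoly_succ (m : ℕ) : Ppoly (m + 1) = (X + (m : Polynomial ℤ)) * Ppoly m := by
  rw [Ppoly, ← (Equiv.Perm.decomposeFin (n := m)).symm.sum_comp (fun σ => X ^ ncyc σ)]
  rw [Fintype.sum_prod_type]
  have key : ∀ (p : Fin (m + 1)) (e : Perm (Fin m)),
      ncyc (Equiv.Perm.decomposeFin.symm (p, e)) = if p = 0 then ncyc e + 1 else ncyc e := by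
    intro p e
    set f : Fin m ≃ {x : Fin (m+1) // x ≠ 0} := finSuccAboveEquiv 0 with hf
    have hE : Equiv.Perm.decomposeFin.symm (p, e) = swap 0 p * e.extendDomain f := by
      ext z
      refine Fin.cases ?_ (fun i => ?_) z
      · rw [Equiv.Perm.decomposeFin_symm_apply_zero, mul_apply,
          extendDomain_apply_not_subtype _ f (by simp)]
        simp
      · rw [Equiv.Perm.decomposeFin_symm_apply_succ, mul_apply,
          extendDomain_apply_subtype _ f (Fin.succ_ne_zero i)]
        have h1 : ∀ x : Fin m, f x = ⟨x.succ, Fin.succ_ne_zero x⟩ := fun x =>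
          Subtype.ext (by simp [hf, finSuccAboveEquiv_apply, Fin.zero_succAbove])
        have hsymm : f.symm ⟨i.succ, Fin.succ_ne_zero i⟩ = i := by
          rw [Equiv.symm_apply_eq, h1]
        rw [hsymm, h1]
    have hext : ncyc (e.extendDomain f) = ncyc e + 1 := by
      rw [ncyc_extendDomain]
      simp
    by_cases hp : p = 0
    · subst hp
      rw [if_pos rfl, hE]
      simp [hext, Equiv.Perm.refl_mul]
    · rw [if_neg hp, hE]
      have h0 : (e.extendDomain f) 0 = 0 :=
        extendDomain_apply_not_subtype _ f (by simp)
      have := ncyc_swap_mul h0 (Ne.symm hp)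
      omega
  calc ∑ p : Fin (m+1), ∑ e : Perm (Fin m), X ^ ncyc (Equiv.Perm.decomposeFin.symm (p, e))
      = ∑ p : Fin (m+1), ∑ e : Perm (Fin m), (if p = 0 then X * X ^ ncyc e else X ^ ncyc e) := by
        refine Finset.sum_congr rfl fun p _ => Finset.sum_congr rfl fun e _ => ?_
        rw [key p e]
        split <;> ring
    _ = ∑ p : Fin (m+1), (if p = 0 then X * Ppoly m else Ppoly m) := by
        refine Finset.sum_congr rfl fun p _ => ?_
        split
        · rw [Ppoly, Finset.mul_sum]
        · rfl
    _ = (X + (m : Polynomial ℤ)) * Ppoly m := by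
        rw [Finset.sum_ite]
        simp only [Finset.sum_const, Finset.filter_eq', Finset.mem_univ, if_true,
          Finset.sum_singleton]
        have hcard : (Finset.univ.filter (fun p : Fin (m+1) => ¬p = 0)).card = m := by
          rw [Finset.filter_not, Finset.filter_eq', if_pos (Finset.mem_univ _),
            Finset.card_sdiff_of_subset (by simp)]
          simp
        rw [hcard, nsmul_eq_mul, Finset.card_singleton]
        push_cast
        ring


lemma myFinRotate_of_lt {k : ℕ} {i : Fin k} (h : (i : ℕ) + 1 < k) :
    finRotate k i = ⟨(i : ℕ) + 1, h⟩ := by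
  match k with
  | 0 => exact absurd i.2 (by omega)
  | k + 1 =>
    rw [finRotate_succ_apply]
    ext
    rw [Fin.val_add_one_of_lt]
    rw [Fin.lt_iff_val_lt_val, Fin.val_last]
    omega

lemma myFinRotate_top {k : ℕ} {i : Fin k} (hk : 0 < k) (h : (i : ℕ) = k - 1) :
    finRotate k i = ⟨0, hk⟩ := by
  match k with
  | 0 => exact absurd i.2 (by omega)
  | k + 1 =>
    have : i = Fin.last k := by ext; simpa using h
    subst this
    rw [finRotate_last]
    rfl

variable {n : ℕ}

/-- the increasing cycle on a finset -/
noncomputable def cycOn (C : Finset (Fin (n + 1))) : Perm (Fin (n + 1)) :=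
  (finRotate C.card).extendDomain (C.orderIsoOfFin rfl).toEquiv

lemma cycOn_apply_not_mem {C : Finset (Fin (n + 1))} {z : Fin (n + 1)} (h : z ∉ C) :
    cycOn C z = z :=
  extendDomain_apply_not_subtype _ _ h

lemma cycOn_apply_orderIso (C : Finset (Fin (n + 1))) (i : Fin C.card) :
    cycOn C (C.orderIsoOfFin rfl i) = C.orderIsoOfFin rfl (finRotate C.card i) := by
  rw [cycOn, extendDomain_apply_subtype _ _ (C.orderIsoOfFin rfl i).2]
  have h1 : (C.orderIsoOfFin rfl).toEquiv.symm
      ⟨((C.orderIsoOfFin rfl i : Fin (n+1))), (C.orderIsoOfFin rfl i).2⟩ = i := by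
    rw [Subtype.coe_eta]
    exact (C.orderIsoOfFin rfl).toEquiv.symm_apply_apply i
  rw [h1]
  rfl

lemma cycOn_apply_mem {C : Finset (Fin (n + 1))} {z : Fin (n + 1)} (h : z ∈ C) :
    cycOn C z ∈ C := by
  have hz : z = C.orderIsoOfFin rfl ((C.orderIsoOfFin rfl).symm ⟨z, h⟩) := by simp
  rw [hz, cycOn_apply_orderIso]
  exact (C.orderIsoOfFin rfl _).2

lemma orderIso_inj {C : Finset (Fin (n + 1))} {i j : Fin C.card}
    (h : (C.orderIsoOfFin rfl i : Fin (n + 1)) = C.orderIsoOfFin rfl j) : i = j :=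
  (C.orderIsoOfFin rfl).injective (Subtype.ext h)

-- the top of C is last, if last ∈ C
lemma orderIso_top {C : Finset (Fin (n + 1))} (hL : Fin.last n ∈ C)
    {i : Fin C.card} (h : (i : ℕ) = C.card - 1) :
    (C.orderIsoOfFin rfl i : Fin (n + 1)) = Fin.last n := by
  have h1 : i ≤ (C.orderIsoOfFin rfl).symm ⟨Fin.last n, hL⟩ := by
    rw [← (C.orderIsoOfFin rfl).le_iff_le]
    refine Subtype.coe_le_coe.mp ?_
    simpa using Fin.le_last _
  have h2 : (C.orderIsoOfFin rfl).symm ⟨Fin.last n, hL⟩ ≤ i := by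
    have := ((C.orderIsoOfFin rfl).symm ⟨Fin.last n, hL⟩).2
    rw [Fin.le_iff_val_le_val, h]
    omega
  have h3 : i = (C.orderIsoOfFin rfl).symm ⟨Fin.last n, hL⟩ := le_antisymm h1 h2
  rw [h3]
  simp

lemma cycOn_lt_apply {C : Finset (Fin (n + 1))} (hL : Fin.last n ∈ C)
    {z : Fin (n + 1)} (hz : z ∈ C) (hzL : z ≠ Fin.last n) : z < cycOn C z := by
  have hzi : (C.orderIsoOfFin rfl ((C.orderIsoOfFin rfl).symm ⟨z, hz⟩) : Fin (n+1)) = z := by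
    simp
  have hlt : (((C.orderIsoOfFin rfl).symm ⟨z, hz⟩ : Fin C.card) : ℕ) + 1 < C.card := by
    rcases lt_or_ge ((((C.orderIsoOfFin rfl).symm ⟨z, hz⟩ : Fin C.card) : ℕ) + 1) C.card with h | h
    · exact h
    · exfalso
      apply hzL
      rw [← hzi]
      refine orderIso_top hL ?_
      have := ((C.orderIsoOfFin rfl).symm ⟨z, hz⟩ : Fin C.card).2
      omega
  rw [← hzi, cycOn_apply_orderIso, myFinRotate_of_lt hlt]
  refine Subtype.coe_lt_coe.mpr ((C.orderIsoOfFin rfl).strictMono ?_)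
  exact Fin.lt_iff_val_lt_val.mpr (Nat.lt_succ_self _)

lemma sameCycle_finRotate {k : ℕ} (a b : Fin k) : (finRotate k).SameCycle a b := by
  match k with
  | 0 => exact absurd a.2 (by omega)
  | 1 => rw [Subsingleton.elim a b]
  | k + 2 =>
    exact (isCycle_finRotate).sameCycle
      (by rw [← mem_support, support_finRotate]; exact Finset.mem_univ _)
      (by rw [← mem_support, support_finRotate]; exact Finset.mem_univ _)

lemma cycOn_sameCycle {C : Finset (Fin (n + 1))} {z w : Fin (n + 1)}
    (hz : z ∈ C) (hw : w ∈ C) : (cycOn C).SameCycle z w := by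
  have h1 : z = ((C.orderIsoOfFin rfl) ((C.orderIsoOfFin rfl).symm ⟨z, hz⟩) : Fin (n+1)) := by simp
  have h2 : w = ((C.orderIsoOfFin rfl) ((C.orderIsoOfFin rfl).symm ⟨w, hw⟩) : Fin (n+1)) := by simp
  rw [h1, h2, cycOn]
  exact (sameCycle_finRotate _ _).extendDomain

-- uniqueness
lemma cycOn_unique {C : Finset (Fin (n + 1))} (hL : Fin.last n ∈ C) (σ : Perm (Fin (n + 1)))
    (hmap : ∀ z ∈ C, σ z ∈ C)
    (hinc : ∀ z ∈ C, z ≠ Fin.last n → z < σ z) :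
    ∀ z ∈ C, σ z = cycOn C z := by
  have hk0 : 0 < C.card := Finset.card_pos.mpr ⟨_, hL⟩
  have claimA : ∀ d a (ha : a + 1 < C.card) (hak : a < C.card), C.card - a = d →
      σ (C.orderIsoOfFin rfl ⟨a, hak⟩) = (C.orderIsoOfFin rfl ⟨a + 1, ha⟩ : Fin (n+1)) := by
    intro d
    induction d using Nat.strong_induction_on with
    | _ d IH =>
      intro a ha hak hd
      have hzC : (C.orderIsoOfFin rfl ⟨a, hak⟩ : Fin (n+1)) ∈ C := (C.orderIsoOfFin rfl _).2
      have hzL : (C.orderIsoOfFin rfl ⟨a, hak⟩ : Fin (n+1)) ≠ Fin.last n := by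
        intro h
        rw [← orderIso_top hL (i := ⟨C.card - 1, by omega⟩) (by simp)] at h
        have := congrArg Fin.val (orderIso_inj h)
        simp at this
        omega
      have hσC : σ (C.orderIsoOfFin rfl ⟨a, hak⟩) ∈ C := hmap _ hzC
      have hσlt : (C.orderIsoOfFin rfl ⟨a, hak⟩ : Fin (n+1)) < σ (C.orderIsoOfFin rfl ⟨a, hak⟩) :=
        hinc _ hzC hzL
      have hmz : (C.orderIsoOfFin rfl ((C.orderIsoOfFin rfl).symm ⟨_, hσC⟩) : Fin (n+1))
          = σ (C.orderIsoOfFin rfl ⟨a, hak⟩) := by simp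
      set m := ((C.orderIsoOfFin rfl).symm ⟨_, hσC⟩ : Fin C.card) with hmdef
      have hamv : a < (m : ℕ) := by
        have : (⟨a, hak⟩ : Fin C.card) < m := by
          rw [← (C.orderIsoOfFin rfl).lt_iff_lt]
          exact Subtype.coe_lt_coe.mp (by rw [hmz]; exact hσlt)
        exact this
      by_cases hcase : (m : ℕ) = a + 1
      · rw [← hmz]
        congr 1
        exact congrArg _ (Fin.ext (by simp only [Fin.val_mk]; omega))
      · exfalso
        have hmk : (m : ℕ) < C.card := m.2
        have ha' : ((m : ℕ) - 1) + 1 < C.card := by omega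
        have hak' : (m : ℕ) - 1 < C.card := by omega
        have hIH := IH (C.card - ((m : ℕ) - 1)) (by omega) ((m : ℕ) - 1) ha' hak' rfl
        have heq : σ (C.orderIsoOfFin rfl ⟨(m : ℕ) - 1, hak'⟩)
            = σ (C.orderIsoOfFin rfl ⟨a, hak⟩) := by
          rw [hIH, ← hmz]
          congr 1
          exact congrArg _ (Fin.ext (by simp only [Fin.val_mk]; omega))
        have := congrArg Fin.val (orderIso_inj (σ.injective heq))
        simp at this
        omega
  have claimB : σ (Fin.last n) = (C.orderIsoOfFin rfl ⟨0, hk0⟩ : Fin (n+1)) := by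
    have hσC : σ (Fin.last n) ∈ C := hmap _ hL
    have hmz : (C.orderIsoOfFin rfl ((C.orderIsoOfFin rfl).symm ⟨_, hσC⟩) : Fin (n+1))
        = σ (Fin.last n) := by simp
    set m := ((C.orderIsoOfFin rfl).symm ⟨_, hσC⟩ : Fin C.card) with hmdef
    by_cases hm0 : (m : ℕ) = 0
    · rw [← hmz]
      congr 1
      exact congrArg _ (Fin.ext (by simp only [Fin.val_mk]; omega))
    · exfalso
      have hmk : (m : ℕ) < C.card := m.2
      have ha' : ((m : ℕ) - 1) + 1 < C.card := by omega
      have hak' : (m : ℕ) - 1 < C.card := by omega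
      have h1 := claimA (C.card - ((m : ℕ) - 1)) ((m : ℕ) - 1) ha' hak' rfl
      have heq : σ (C.orderIsoOfFin rfl ⟨(m : ℕ) - 1, hak'⟩) = σ (Fin.last n) := by
        rw [h1, ← hmz]
        congr 1
        exact congrArg _ (Fin.ext (by simp only [Fin.val_mk]; omega))
      have h2 := σ.injective heq
      rw [← orderIso_top hL (i := ⟨C.card - 1, by omega⟩) (by simp)] at h2
      have := congrArg Fin.val (orderIso_inj h2)
      simp at this
      omega
  intro z hz
  have hzi : (C.orderIsoOfFin rfl ((C.orderIsoOfFin rfl).symm ⟨z, hz⟩) : Fin (n+1)) = z := by simp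
  set i := ((C.orderIsoOfFin rfl).symm ⟨z, hz⟩ : Fin C.card) with hidef
  by_cases hlt : (i : ℕ) + 1 < C.card
  · have hi2 : i = (⟨(i : ℕ), i.2⟩ : Fin C.card) := by ext; rfl
    rw [← hzi, hi2, claimA (C.card - (i : ℕ)) (i : ℕ) hlt i.2 rfl, ← hi2,
      cycOn_apply_orderIso, myFinRotate_of_lt hlt]
  · have htop : (i : ℕ) = C.card - 1 := by have := i.2; omega
    have hzL : z = Fin.last n := by rw [← hzi]; exact orderIso_top hL htop
    rw [hzL, claimB, ← hzL, ← hzi, cycOn_apply_orderIso, myFinRotate_top hk0 htop]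

lemma cyc_eq_ncyc {m : ℕ} (σ : Perm (Fin m)) : cyc σ = ncyc σ := by
  have hs : σ.support = Finset.univ.filter (fun x => ¬ σ x = x) := by
    ext x; simp [Equiv.Perm.mem_support]
  have h1 : (Finset.univ.filter (fun i => σ i = i)).card
      + (Finset.univ.filter (fun x => ¬ σ x = x)).card = Fintype.card (Fin m) := by
    rw [Finset.card_filter_add_card_filter_not, Finset.card_univ]
  rw [cyc, ncyc, fixp, hs]
  omega

/-- cycle set of `σ`: elements on the cycle of the largest element. -/
noncomputable def cycSet (σ : Perm (Fin (n + 1))) : Finset (Fin (n + 1)) :=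
  Finset.univ.filter fun x => σ.SameCycle x (Fin.last n)

lemma mem_cycSet {σ : Perm (Fin (n + 1))} {x : Fin (n + 1)} :
    x ∈ cycSet σ ↔ σ.SameCycle x (Fin.last n) := by
  simp [cycSet]

section Fiber

variable {C : Finset (Fin (n + 1))}

/-- embed a permutation of the complement -/
noncomputable def emb (C : Finset (Fin (n + 1))) (τ : Perm (Fin (n + 1 - C.card))) :
    Perm (Fin (n + 1)) :=
  τ.extendDomain (Cᶜ.orderIsoOfFin (by simp [Finset.card_compl])).toEquiv

lemma emb_apply_mem {τ : Perm (Fin (n + 1 - C.card))} {z : Fin (n + 1)} (h : z ∈ C) :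
    emb C τ z = z :=
  extendDomain_apply_not_subtype _ _ (by simpa using h)


lemma ncyc_emb (hC : C.card ≤ n + 1) (τ : Perm (Fin (n + 1 - C.card))) :
    ncyc (emb C τ) = ncyc τ + C.card := by
  rw [emb, ncyc_extendDomain]
  simp only [Fintype.card_fin]
  omega

lemma support_emb_subset (τ : Perm (Fin (n + 1 - C.card))) :
    (emb C τ).support ⊆ Cᶜ := by
  intro z hz
  by_contra h
  have h1 : z ∈ C := by simpa using h
  exact (mem_support.mp hz) (emb_apply_mem h1)

lemma emb_apply_not_mem {τ : Perm (Fin (n + 1 - C.card))} {z : Fin (n + 1)} (h : z ∉ C) :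
    emb C τ z ∉ C := by
  by_cases he : emb C τ z = z
  · rwa [he]
  · have hm : emb C τ z ∈ (emb C τ).support :=
      apply_mem_support.mpr (mem_support.mpr he)
    exact Finset.mem_compl.mp (support_emb_subset τ hm)

lemma support_cycOn_subset : (cycOn C).support ⊆ C := by
  intro z hz
  by_contra h
  exact (mem_support.mp hz) (cycOn_apply_not_mem h)

lemma disjoint_cycOn_emb (τ : Perm (Fin (n + 1 - C.card))) :
    Disjoint (cycOn C) (emb C τ) := by
  rw [disjoint_iff_disjoint_support]
  exact Finset.disjoint_of_subset_left support_cycOn_subset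
    (Finset.disjoint_of_subset_right (support_emb_subset τ) disjoint_compl_right)

/-- the fiber parametrization -/
noncomputable def phi (C : Finset (Fin (n + 1))) (τ : Perm (Fin (n + 1 - C.card))) :
    Perm (Fin (n + 1)) :=
  cycOn C * emb C τ

lemma phi_apply_mem {τ : Perm (Fin (n + 1 - C.card))} {z : Fin (n + 1)} (h : z ∈ C) :
    phi C τ z = cycOn C z := by
  rw [phi, mul_apply, emb_apply_mem h]

lemma phi_apply_not_mem {τ : Perm (Fin (n + 1 - C.card))} {z : Fin (n + 1)} (h : z ∉ C) :
    phi C τ z = emb C τ z := by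
  rw [phi, mul_apply, cycOn_apply_not_mem (emb_apply_not_mem h)]

lemma cycOn_eq_one (h : C.card ≤ 1) : cycOn C = 1 := by
  ext z
  by_cases hz : z ∈ C
  · have h1 : C.card = 1 := le_antisymm h (Finset.card_pos.mpr ⟨z, hz⟩)
    have hz2 : z = C.orderIsoOfFin rfl ((C.orderIsoOfFin rfl).symm ⟨z, hz⟩) := by simp
    rw [one_apply, hz2, cycOn_apply_orderIso]
    congr 2
    refine congrArg _ (Fin.ext ?_)
    have h2 := (finRotate C.card ((C.orderIsoOfFin rfl).symm ⟨z, hz⟩)).2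
    have h3 := ((C.orderIsoOfFin rfl).symm ⟨z, hz⟩).2
    omega
  · rw [cycOn_apply_not_mem hz, one_apply]

lemma isCycle_cycOn (h : 2 ≤ C.card) :
    (cycOn C).IsCycle ∧ (cycOn C).support.card = C.card := by
  have h1 : (finRotate C.card).IsCycle := isCycle_finRotate_of_le h
  constructor
  · exact h1.extendDomain _
  · rw [cycOn, card_support_extend_domain, support_finRotate_of_le h, Finset.card_univ,
      Fintype.card_fin]

lemma ncyc_phi (hL : Fin.last n ∈ C) (τ : Perm (Fin (n + 1 - C.card))) :
    ncyc (phi C τ) = ncyc τ + 1 := by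
  have hC : C.card ≤ n + 1 := by
    have := Finset.card_le_univ C
    simpa using this
  have hC1 : 1 ≤ C.card := Finset.card_pos.mpr ⟨_, hL⟩
  rcases eq_or_lt_of_le hC1 with h1 | h2
  · rw [phi, cycOn_eq_one (le_of_eq h1.symm), one_mul, ncyc_emb hC]
    omega
  · obtain ⟨hcyc, hsupp⟩ := isCycle_cycOn h2
    have := ncyc_isCycle_mul_disjoint hcyc (disjoint_cycOn_emb τ)
    rw [hsupp, ncyc_emb hC] at this
    rw [phi]
    omega

lemma phi_sameCycle (hL : Fin.last n ∈ C) (τ : Perm (Fin (n + 1 - C.card)))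
    (z : Fin (n + 1)) : (phi C τ).SameCycle z (Fin.last n) ↔ z ∈ C := by
  constructor
  · intro hsc
    by_contra hz
    obtain ⟨i, -, hi⟩ := hsc.exists_pow_eq'
    have : ∀ j : ℕ, ((phi C τ) ^ j) z ∉ C := by
      intro j
      induction j with
      | zero => simpa using hz
      | succ j ih =>
        rw [pow_succ', mul_apply, phi_apply_not_mem ih]
        exact emb_apply_not_mem ih
    exact this i (hi ▸ hL)
  · intro hz
    obtain ⟨i, -, hi⟩ := (cycOn_sameCycle hz hL).exists_pow_eq'
    have key : ∀ j : ℕ, ((phi C τ) ^ j) z = ((cycOn C) ^ j) z ∧ ((cycOn C) ^ j) z ∈ C := by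
      intro j
      induction j with
      | zero => exact ⟨rfl, by simpa using hz⟩
      | succ j ih =>
        rw [pow_succ', mul_apply, pow_succ', mul_apply, ih.1]
        exact ⟨phi_apply_mem ih.2, cycOn_apply_mem ih.2⟩
    exact ⟨(i : ℤ), by rw [zpow_natCast, (key i).1, hi]⟩

lemma phi_mem_Qhat (hL : Fin.last n ∈ C) (τ : Perm (Fin (n + 1 - C.card))) :
    phi C τ ∈ Qhat n := by
  rw [Qhat, Finset.mem_filter]
  refine ⟨Finset.mem_univ _, fun x hsc hxL => ?_⟩
  have hx : x ∈ C := (phi_sameCycle hL τ x).mp hsc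
  rw [phi_apply_mem hx]
  exact cycOn_lt_apply hL hx hxL

lemma cycSet_phi (hL : Fin.last n ∈ C) (τ : Perm (Fin (n + 1 - C.card))) :
    cycSet (phi C τ) = C := by
  ext z
  rw [mem_cycSet]
  exact phi_sameCycle hL τ z

lemma phi_injective (C : Finset (Fin (n + 1))) : Function.Injective (phi C) := by
  intro τ τ' h
  rw [phi, phi] at h
  have h2 : emb C τ = emb C τ' := mul_left_cancel h
  ext a
  have h3 := congrFun (congrArg DFunLike.coe h2)
    ((Cᶜ.orderIsoOfFin (by simp [Finset.card_compl])).toEquiv a)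
  rw [emb, emb, extendDomain_apply_subtype _ _ (by exact ((Cᶜ.orderIsoOfFin _).toEquiv a).2),
    extendDomain_apply_subtype _ _ (by exact ((Cᶜ.orderIsoOfFin _).toEquiv a).2)] at h3
  simp only [Subtype.coe_eta, Equiv.symm_apply_apply] at h3
  have := (Cᶜ.orderIsoOfFin (by simp [Finset.card_compl])).toEquiv.injective
    (Subtype.ext h3)
  exact congrArg Fin.val this

lemma phi_surjective (hL : Fin.last n ∈ C) {σ : Perm (Fin (n + 1))}
    (hQ : σ ∈ Qhat n) (hcs : cycSet σ = C) : ∃ τ, phi C τ = σ := by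
  have hinv : ∀ z, z ∈ Cᶜ ↔ σ z ∈ Cᶜ := by
    intro z
    simp only [Finset.mem_compl]
    rw [← hcs, mem_cycSet, mem_cycSet, not_iff_not]
    exact (sameCycle_apply_left).symm
  set e := (Cᶜ.orderIsoOfFin (by simp [Finset.card_compl] :
    Cᶜ.card = n + 1 - C.card)).toEquiv with he
  set ρ := σ.subtypePerm (fun z => (hinv z).symm) with hρ
  refine ⟨e.symm.permCongr ρ, ?_⟩
  have hQ' : ∀ x, σ.SameCycle x (Fin.last n) → x ≠ Fin.last n → x < σ x := by
    have := Finset.mem_filter.mp hQ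
    exact this.2
  refine Equiv.ext fun z => ?_
  by_cases hz : z ∈ C
  · rw [phi_apply_mem hz]
    refine (cycOn_unique hL σ ?_ ?_ z hz).symm
    · intro w hw
      have := (hinv w).not
      simp only [Finset.mem_compl, not_not] at this
      exact this.mp hw
    · intro w hw hwL
      refine hQ' w ?_ hwL
      rw [← hcs, mem_cycSet] at hw
      exact hw
  · rw [phi_apply_not_mem hz, emb, extendDomain_apply_subtype _ _ (Finset.mem_compl.mpr hz)]
    simp only [Equiv.permCongr_apply, Equiv.symm_symm, Equiv.apply_symm_apply]
    simp [he, hρ]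

lemma fiber_sum (hL : Fin.last n ∈ C) :
    ∑ σ ∈ (Qhat n).filter (fun σ => cycSet σ = C), (X : Polynomial ℤ) ^ cyc σ
      = X * Ppoly (n + 1 - C.card) := by
  rw [Ppoly, Finset.mul_sum]
  symm
  refine Finset.sum_nbij (phi C) ?_ ?_ ?_ ?_
  · intro τ _
    rw [Finset.mem_filter]
    exact ⟨phi_mem_Qhat hL τ, cycSet_phi hL τ⟩
  · exact fun a _ b _ h => phi_injective C h
  · intro σ hσ
    simp only [Finset.coe_filter, Set.mem_setOf_eq] at hσ
    obtain ⟨τ, hτ⟩ := phi_surjective hL hσ.1 hσ.2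
    exact ⟨τ, by simp, hτ⟩
  · intro τ _
    rw [cyc_eq_ncyc, ncyc_phi hL τ, pow_succ]
    ring

end Fiber

noncomputable def Apoly (n : ℕ) : Polynomial ℤ :=
  ∑ j ∈ Finset.range (n + 1), (n.choose j) • Ppoly j

lemma Tpoly_eq (n : ℕ) : Tpoly n = X * Apoly n := by
  have h1 : ∀ σ ∈ Qhat n, cycSet σ ∈ (Finset.univ.powerset.filter
      fun C : Finset (Fin (n+1)) => Fin.last n ∈ C) := by
    intro σ _
    rw [Finset.mem_filter]
    exact ⟨Finset.mem_powerset.mpr (Finset.subset_univ _),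
      mem_cycSet.mpr (Equiv.Perm.SameCycle.refl _ _)⟩
  rw [Tpoly, ← Finset.sum_fiberwise_of_maps_to h1]
  rw [Finset.sum_congr rfl (fun C hC => fiber_sum (Finset.mem_filter.mp hC).2)]
  have h2 : ∑ C ∈ (Finset.univ.powerset.filter
        fun C : Finset (Fin (n+1)) => Fin.last n ∈ C), X * Ppoly (n + 1 - C.card)
      = ∑ D ∈ ((Finset.univ : Finset (Fin (n+1))).erase (Fin.last n)).powerset,
          X * Ppoly (n - D.card) := by
    symm
    refine Finset.sum_nbij (fun D => insert (Fin.last n) D) ?_ ?_ ?_ ?_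
    · intro D hD
      rw [Finset.mem_filter]
      exact ⟨Finset.mem_powerset.mpr (Finset.subset_univ _), Finset.mem_insert_self _ _⟩
    · intro D1 hD1 D2 hD2 h
      simp only [Finset.coe_powerset, Set.mem_preimage, Set.mem_powerset_iff,
        Finset.coe_subset] at hD1 hD2
      have e1 : Fin.last n ∉ D1 := fun hc => by
        have := hD1 hc; simp at this
      have e2 : Fin.last n ∉ D2 := fun hc => by
        have := hD2 hc; simp at this
      rw [← Finset.erase_insert e1, ← Finset.erase_insert e2,
        show insert (Fin.last n) D1 = insert (Fin.last n) D2 from h]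
    · intro C hC
      simp only [Finset.coe_filter, Set.mem_setOf_eq] at hC
      obtain ⟨hCp, hCL⟩ := hC
      refine ⟨C.erase (Fin.last n), ?_, ?_⟩
      · simp only [Finset.coe_powerset, Set.mem_preimage, Set.mem_powerset_iff,
          Finset.coe_subset]
        exact Finset.erase_subset_erase _ (Finset.subset_univ _)
      · exact Finset.insert_erase hCL
    · intro D hD
      have hD' : Fin.last n ∉ D := fun hc => by
        have := Finset.mem_powerset.mp hD hc; simp at this
      rw [Finset.card_insert_of_notMem hD']
      congr 2 <;> omega
  rw [h2]
  have hcard : ((Finset.univ : Finset (Fin (n+1))).erase (Fin.last n)).card = n := by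
    rw [Finset.card_erase_of_mem (Finset.mem_univ _), Finset.card_univ, Fintype.card_fin]
    omega
  rw [Finset.sum_powerset, hcard]
  have h3 : ∀ j ∈ Finset.range (n+1),
      ∑ D ∈ Finset.powersetCard j ((Finset.univ : Finset (Fin (n+1))).erase (Fin.last n)),
        X * Ppoly (n - D.card) = (n.choose j) • (X * Ppoly (n - j)) := by
    intro j _
    rw [Finset.sum_congr rfl (fun D hD => by
      rw [(Finset.mem_powersetCard.mp hD).2]), Finset.sum_const, Finset.card_powersetCard,
      hcard]
  rw [Finset.sum_congr rfl h3]
  rw [Apoly, Finset.mul_sum]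
  rw [← Finset.sum_range_reflect (fun j => (n.choose j) • (X * Ppoly (n - j))) (n+1)]
  refine Finset.sum_congr rfl fun j hj => ?_
  have hjn : j ≤ n := by
    have := Finset.mem_range.mp hj; omega
  rw [Nat.add_sub_cancel]
  rw [Nat.choose_symm hjn]
  rw [show n - (n - j) = j by omega]
  rw [nsmul_eq_mul, nsmul_eq_mul]
  ring

noncomputable def Bpoly (n : ℕ) : Polynomial ℤ :=
  ∑ j ∈ Finset.range (n + 1), (n.choose j) • Ppoly (j + 1)

lemma Apoly_zero : Apoly 0 = 1 := by simp [Apoly, Ppoly_zero]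

lemma Bpoly_zero : Bpoly 0 = X := by
  have := Ppoly_succ 0
  simp [Ppoly_zero] at this
  simp [Bpoly, this]

lemma Apoly_succ (n : ℕ) : Apoly (n + 1) = Apoly n + Bpoly n := by
  have e1 : Apoly (n + 1) = Bpoly n
      + (∑ i ∈ Finset.range (n + 1), n.choose (i + 1) • Ppoly (i + 1) + Ppoly 0) := by
    rw [Apoly, Finset.sum_range_succ' (fun j => ((n+1).choose j) • Ppoly j) (n + 1), Bpoly]
    simp only [Nat.choose_succ_succ, add_smul, Nat.choose_zero_right, one_smul]
    rw [Finset.sum_add_distrib]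
    ring
  have e2 : ∑ i ∈ Finset.range (n + 1), n.choose (i + 1) • Ppoly (i + 1)
      = ∑ i ∈ Finset.range n, n.choose (i + 1) • Ppoly (i + 1) := by
    rw [Finset.sum_range_succ]
    simp
  have e3 : Apoly n = ∑ i ∈ Finset.range n, n.choose (i + 1) • Ppoly (i + 1) + Ppoly 0 := by
    rw [Apoly, Finset.sum_range_succ' (fun j => (n.choose j) • Ppoly j) n]
    simp
  rw [e1, e2, e3]
  ring

lemma Bpoly_succ (n : ℕ) :
    Bpoly (n + 1) = X * Apoly (n + 1) + ((n : Polynomial ℤ) + 1) * Bpoly n := by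
  have hsm : ∀ (c : ℕ) (p : Polynomial ℤ), c • p = (c : Polynomial ℤ) * p := fun c p =>
    nsmul_eq_mul c p
  have step1 : Bpoly (n + 1) = ∑ j ∈ Finset.range (n + 2),
      (((n+1).choose j : Polynomial ℤ) * ((X + (j : Polynomial ℤ)) * Ppoly j)) := by
    rw [Bpoly]
    refine Finset.sum_congr rfl fun j _ => ?_
    rw [hsm, Ppoly_succ j]
  have step2 : ∀ j : ℕ, ((n+1).choose j : Polynomial ℤ) * ((X + (j : Polynomial ℤ)) * Ppoly j)
      = X * (((n+1).choose j : Polynomial ℤ) * Ppoly j)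
        + ((((n+1).choose j * j : ℕ)) : Polynomial ℤ) * Ppoly j := by
    intro j
    push_cast
    ring
  rw [step1, Finset.sum_congr rfl fun j _ => step2 j, Finset.sum_add_distrib, ← Finset.mul_sum]
  have stepA : ∑ j ∈ Finset.range (n + 2), ((n+1).choose j : Polynomial ℤ) * Ppoly j
      = Apoly (n + 1) := by
    rw [Apoly]
    exact Finset.sum_congr rfl fun j _ => (hsm _ _).symm
  rw [stepA]
  congr 1
  rw [Finset.sum_range_succ'
    (fun j => ((((n+1).choose j * j : ℕ)) : Polynomial ℤ) * Ppoly j) (n + 1)]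
  simp only [Nat.mul_zero, Nat.cast_zero, zero_mul, add_zero]
  rw [Bpoly, Finset.mul_sum]
  refine Finset.sum_congr rfl fun i _ => ?_
  rw [hsm, show (n+1).choose (i+1) * (i+1) = (n+1) * n.choose i from
    (Nat.add_one_mul_choose_eq n i).symm]
  push_cast
  ring

lemma Apoly_rec (n : ℕ) : Apoly (n + 2)
    = ((n : Polynomial ℤ) + 2 + X) * Apoly (n + 1) - ((n : Polynomial ℤ) + 1) * Apoly n := by
  have h1 := Apoly_succ (n + 1)
  have h2 := Bpoly_succ n
  have h3 := Apoly_succ n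
  have hB : Bpoly n = Apoly (n + 1) - Apoly n := by rw [h3]; ring
  rw [h1, h2, hB]
  ring

theorem Tpoly_recurrence :
    Tpoly 0 = X ∧ Tpoly 1 = X + X ^ 2 ∧
      ∀ n : ℕ, 1 ≤ n →
        Tpoly (n + 1) = ((n : Polynomial ℤ) + 1 + X) * Tpoly n
          - (n : Polynomial ℤ) * Tpoly (n - 1) := by
  refine ⟨?_, ?_, ?_⟩
  · rw [Tpoly_eq, Apoly_zero, mul_one]
  · rw [Tpoly_eq, Apoly_succ, Apoly_zero, Bpoly_zero]
    ring
  · intro n hn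
    obtain ⟨m, rfl⟩ : ∃ m, n = m + 1 := ⟨n - 1, by omega⟩
    have h := Apoly_rec m
    rw [Tpoly_eq, Tpoly_eq, Tpoly_eq, show m + 1 + 1 = m + 2 from rfl, h,
      show m + 1 - 1 = m from rfl]
    push_cast
    ring
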